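/- Let b > 0, define a : [−h,0] → ℝ by a(s) = s e^{bs}, and let L : C([−h,0];E) → E be a continuous linear map with operator norm ‖L‖ < b. Then the continuous linear map T : E → E defined by T y⁰ = y⁰ − L(θ ↦ a(θ) y⁰) satisfies ‖T y⁰‖ ≥ (1 − 1/e) ‖y⁰‖ ≥ (1/2) ‖y⁰‖ for all y⁰ ∈ E, and T is a linear isomorphism of E (a continuous linear bijection with continuous inverse). -/

import Mathlib

/-- The continuous function `θ ↦ a(θ) y⁰` on `[-h,0]`, where `a(s) = s e^{bs}`. -/
noncomputable def aMap {E : Type*} [NormedAddCommGroup E] [NormedSpace ℝ E]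
    (h b : ℝ) (y0 : E) : C(Set.Icc (-h) (0 : ℝ), E) :=
  ⟨fun θ => ((θ : ℝ) * Real.exp (b * (θ : ℝ))) • y0,
    (continuous_subtype_val.mul
      (Real.continuous_exp.comp (continuous_const.mul continuous_subtype_val))).smul
      continuous_const⟩

/-- Pointwise bound: for `θ ≤ 0`, `|θ e^{bθ}| ≤ 1/(b e)`. -/
lemma key_bound (b θ : ℝ) (hb : 0 < b) (hθ : θ ≤ 0) :
    |θ * Real.exp (b * θ)| ≤ (b * Real.exp 1)⁻¹ := by
  have key : ∀ t : ℝ, 0 ≤ t → t * Real.exp (-t) ≤ (Real.exp 1)⁻¹ := by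
    intro t ht
    have h1 := Real.add_one_le_exp (t - 1)
    have h2 : Real.exp (t - 1) = Real.exp t / Real.exp 1 := by rw [Real.exp_sub]
    have h3 : t ≤ Real.exp t / Real.exp 1 := by linarith
    have h4 : t * Real.exp 1 ≤ Real.exp t := by
      rw [div_eq_mul_inv] at h3
      calc t * Real.exp 1 ≤ (Real.exp t * (Real.exp 1)⁻¹) * Real.exp 1 :=
            mul_le_mul_of_nonneg_right h3 (Real.exp_pos 1).le
        _ = Real.exp t := by field_simp
    rw [Real.exp_neg, ← div_eq_mul_inv, inv_eq_one_div,
      div_le_div_iff₀ (Real.exp_pos t) (Real.exp_pos 1)]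
    linarith
  have hkey := key (-(b * θ)) (by nlinarith)
  have h5 : b * (-(θ * Real.exp (b * θ))) ≤ (Real.exp 1)⁻¹ := by
    have : -(b * θ) * Real.exp (b * θ) ≤ (Real.exp 1)⁻¹ := by simpa using hkey
    linarith [this]
  have habs : |θ * Real.exp (b * θ)| = -(θ * Real.exp (b * θ)) :=
    abs_of_nonpos (mul_nonpos_of_nonpos_of_nonneg hθ (Real.exp_pos _).le)
  rw [habs, mul_inv]
  calc -(θ * Real.exp (b * θ)) = b⁻¹ * (b * (-(θ * Real.exp (b * θ)))) := by
        field_simp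
    _ ≤ b⁻¹ * (Real.exp 1)⁻¹ := mul_le_mul_of_nonneg_left h5 (by positivity)

/-- Let `L : C([-h,0];E) → E` be continuous linear with `‖L‖ < b`, and
`T y⁰ = y⁰ - L(a(·) y⁰)` with `a(s) = s e^{bs}`.  Then
`‖T y⁰‖ ≥ (1 - 1/e) ‖y⁰‖ ≥ (1/2) ‖y⁰‖` for all `y⁰`, and `T` is a linear isomorphism
of `E` (a continuous linear bijection with continuous inverse). -/
theorem T_isomorphism {E : Type*} [NormedAddCommGroup E] [NormedSpace ℝ E]
    [CompleteSpace E] (h b : ℝ) (hh : 0 < h) (hb : 0 < b)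
    (L : C(Set.Icc (-h) (0 : ℝ), E) →L[ℝ] E) (hL : ‖L‖ < b) :
    (∀ y0 : E,
      (1 - (Real.exp 1)⁻¹) * ‖y0‖ ≤ ‖y0 - L (aMap h b y0)‖ ∧
      (1 / 2 : ℝ) * ‖y0‖ ≤ (1 - (Real.exp 1)⁻¹) * ‖y0‖) ∧
    ∃ T : E ≃L[ℝ] E, ∀ y0 : E, T y0 = y0 - L (aMap h b y0) := by
  have he : (1 : ℝ) < Real.exp 1 := by
    have := Real.add_one_le_exp 1; linarith
  let Φlin : E →ₗ[ℝ] C(Set.Icc (-h) (0 : ℝ), E) :=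
    { toFun := aMap h b
      map_add' := fun x y => by
        ext θ
        simp only [aMap, ContinuousMap.coe_mk, ContinuousMap.add_apply, smul_add]
      map_smul' := fun c x => by
        ext θ
        simp only [aMap, ContinuousMap.coe_mk, ContinuousMap.smul_apply, RingHom.id_apply]
        exact smul_comm _ _ _ }
  have hΦbound : ∀ y0 : E, ‖Φlin y0‖ ≤ (b * Real.exp 1)⁻¹ * ‖y0‖ := by
    intro y0
    rw [ContinuousMap.norm_le _ (by positivity)]
    intro θ
    calc ‖(Φlin y0) θ‖ = |(θ : ℝ) * Real.exp (b * θ)| * ‖y0‖ := by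
          simp only [Φlin, aMap, LinearMap.coe_mk, AddHom.coe_mk, ContinuousMap.coe_mk,
            norm_smul, Real.norm_eq_abs, abs_mul, abs_of_pos (Real.exp_pos _)]
      _ ≤ (b * Real.exp 1)⁻¹ * ‖y0‖ :=
          mul_le_mul_of_nonneg_right (key_bound b θ hb θ.2.2) (norm_nonneg _)
  let Φ : E →L[ℝ] C(Set.Icc (-h) (0 : ℝ), E) :=
    Φlin.mkContinuous ((b * Real.exp 1)⁻¹) hΦbound
  let A : E →L[ℝ] E := L.comp Φ
  have hAy : ∀ y0 : E, ‖A y0‖ ≤ (Real.exp 1)⁻¹ * ‖y0‖ := by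
    intro y0
    calc ‖A y0‖ ≤ ‖L‖ * ‖Φ y0‖ := L.le_opNorm _
      _ ≤ b * ((b * Real.exp 1)⁻¹ * ‖y0‖) := by
          have h1 : ‖Φ y0‖ ≤ (b * Real.exp 1)⁻¹ * ‖y0‖ := hΦbound y0
          nlinarith [norm_nonneg (Φ y0), ContinuousLinearMap.opNorm_nonneg L,
            norm_nonneg y0, mul_pos hb (Real.exp_pos 1)]
      _ = (Real.exp 1)⁻¹ * ‖y0‖ := by
          rw [mul_inv]; field_simp
  have hA : ‖A‖ ≤ (Real.exp 1)⁻¹ :=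
    ContinuousLinearMap.opNorm_le_bound _ (by positivity) hAy
  have hA1 : ‖A‖ < 1 := lt_of_le_of_lt hA (by
    rw [inv_lt_one_iff₀]; right; exact he)
  have hAeq : ∀ y0 : E, A y0 = L (aMap h b y0) := fun y0 => rfl
  constructor
  · intro y0
    constructor
    · have h1 : ‖y0 - L (aMap h b y0)‖ ≥ ‖y0‖ - ‖A y0‖ := by
        rw [← hAeq]
        have := norm_sub_norm_le y0 (A y0)
        linarith
      have h2 := hAy y0
      nlinarith [norm_nonneg y0]
    · have h2e : (2 : ℝ) ≤ Real.exp 1 := by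
        have := Real.add_one_le_exp 1; linarith
      have h3 : (Real.exp 1)⁻¹ ≤ 1 / 2 := by
        rw [show (1 : ℝ) / 2 = (2 : ℝ)⁻¹ by norm_num]
        exact inv_anti₀ (by norm_num) h2e
      nlinarith [norm_nonneg y0]
  · let u : (E →L[ℝ] E)ˣ := Units.oneSub A hA1
    refine ⟨ContinuousLinearEquiv.unitsEquiv ℝ E u, fun y0 => ?_⟩
    show ((u : E →L[ℝ] E)) y0 = _
    have : (u : E →L[ℝ] E) = 1 - A := rfl
    rw [this]
    simp [hAeq]
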